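/- For M, N as defined (M(x,y)=(x+y)/2, resp. (x+y−√|x−y|)/2 according as |x−y| ≤ 1 or > 1; N analogously with +√|x−y|), the orbit sequences x₀=x, y₀=y, x_{n+1}=M(xₙ,yₙ), y_{n+1}=N(xₙ,yₙ) satisfy xₙ + yₙ = x + y for all n ≥ 0, and lim_{n→∞}(yₙ − xₙ) equals 0 if |x−y| ≤ 1 and equals 1 if |x−y| > 1 (where x ≤ y). Consequently Lo(x,y) = (x+y)/2 if |x−y| ≤ 1 and (x+y−1)/2 otherwise, and Up(x,y) = (x+y)/2 if |x−y| ≤ 1 and (x+y+1)/2 otherwise. -/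

import Mathlib

def orbit (M N : ℝ → ℝ → ℝ) (x y : ℝ) : ℕ → ℝ × ℝ
  | 0 => (x, y)
  | n + 1 => (M (orbit M N x y n).1 (orbit M N x y n).2,
      N (orbit M N x y n).1 (orbit M N x y n).2)

noncomputable def Lo (M N : ℝ → ℝ → ℝ) (x y : ℝ) : ℝ :=
  Filter.liminf (fun n => min (orbit M N x y n).1 (orbit M N x y n).2) Filter.atTop

noncomputable def Up (M N : ℝ → ℝ → ℝ) (x y : ℝ) : ℝ :=
  Filter.limsup (fun n => max (orbit M N x y n).1 (orbit M N x y n).2) Filter.atTop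

noncomputable def Mex (x y : ℝ) : ℝ :=
  if |x - y| ≤ 1 then (x + y) / 2 else (x + y - Real.sqrt |x - y|) / 2

noncomputable def Nex (x y : ℝ) : ℝ :=
  if |x - y| ≤ 1 then (x + y) / 2 else (x + y + Real.sqrt |x - y|) / 2


private lemma sumMN (a b : ℝ) : Mex a b + Nex a b = a + b := by
  unfold Mex Nex; split <;> ring

private lemma gapMN (a b : ℝ) :
    Nex a b - Mex a b = if |a - b| ≤ 1 then 0 else Real.sqrt |a - b| := by
  unfold Mex Nex; split <;> ring

/-- for the example pair `(Mex, Nex)` and `x ≤ y`, the orbit preserves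
the sum `xₙ + yₙ = x + y`, the gap `yₙ − xₙ` tends to `0` when `|x−y| ≤ 1` and to `1`
when `|x−y| > 1`, and consequently `Lo` and `Up` are given by the explicit formulas. -/
theorem stmt15 (x y : ℝ) (hxy : x ≤ y) :
    (∀ n, (orbit Mex Nex x y n).1 + (orbit Mex Nex x y n).2 = x + y) ∧
    (|x - y| ≤ 1 →
      Filter.Tendsto (fun n => (orbit Mex Nex x y n).2 - (orbit Mex Nex x y n).1)
        Filter.atTop (nhds 0) ∧
      Lo Mex Nex x y = (x + y) / 2 ∧ Up Mex Nex x y = (x + y) / 2) ∧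
    (1 < |x - y| →
      Filter.Tendsto (fun n => (orbit Mex Nex x y n).2 - (orbit Mex Nex x y n).1)
        Filter.atTop (nhds 1) ∧
      Lo Mex Nex x y = (x + y - 1) / 2 ∧ Up Mex Nex x y = (x + y + 1) / 2) := by
  have hstep : ∀ n, orbit Mex Nex x y (n+1) =
      (Mex (orbit Mex Nex x y n).1 (orbit Mex Nex x y n).2,
       Nex (orbit Mex Nex x y n).1 (orbit Mex Nex x y n).2) := fun n => rfl
  have hsum : ∀ n, (orbit Mex Nex x y n).1 + (orbit Mex Nex x y n).2 = x + y := by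
    intro n
    induction n with
    | zero => rfl
    | succ n ih => rw [hstep n]; dsimp; rw [sumMN]; exact ih
  refine ⟨hsum, ?_, ?_⟩
  · intro h
    have hg : ∀ n, (orbit Mex Nex x y (n+1)).2 - (orbit Mex Nex x y (n+1)).1 = 0 := by
      intro n
      induction n with
      | zero =>
        have h0 : orbit Mex Nex x y 0 = (x, y) := rfl
        rw [hstep 0]; dsimp; rw [gapMN, h0]; exact if_pos h
      | succ n ih =>
        rw [hstep (n+1)]; dsimp
        rw [gapMN, if_pos]
        rw [abs_sub_comm, abs_of_nonneg (by linarith)]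
        linarith
    have heq : ∀ n, (orbit Mex Nex x y (n+1)).1 = (x+y)/2 ∧
        (orbit Mex Nex x y (n+1)).2 = (x+y)/2 := by
      intro n
      have h1 := hg n
      have h2 := hsum (n+1)
      constructor <;> linarith
    have hten : Filter.Tendsto
        (fun n => (orbit Mex Nex x y n).2 - (orbit Mex Nex x y n).1)
        Filter.atTop (nhds 0) := by
      have hev : (fun _ : ℕ => (0:ℝ)) =ᶠ[Filter.atTop]
          (fun n => (orbit Mex Nex x y n).2 - (orbit Mex Nex x y n).1) := by
        refine Filter.eventually_atTop.2 ⟨1, fun n hn => ?_⟩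
        cases n with
        | zero => omega
        | succ m => exact (hg m).symm
      exact Filter.Tendsto.congr' hev tendsto_const_nhds
    refine ⟨hten, ?_, ?_⟩
    · have : Filter.Tendsto
          (fun n => min (orbit Mex Nex x y n).1 (orbit Mex Nex x y n).2)
          Filter.atTop (nhds ((x+y)/2)) := by
        have hev : (fun _ : ℕ => ((x+y)/2:ℝ)) =ᶠ[Filter.atTop]
            (fun n => min (orbit Mex Nex x y n).1 (orbit Mex Nex x y n).2) := by
          refine Filter.eventually_atTop.2 ⟨1, fun n hn => ?_⟩
          cases n with
          | zero => omega
          | succ m => simp [(heq m).1, (heq m).2]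
        exact Filter.Tendsto.congr' hev tendsto_const_nhds
      exact this.liminf_eq
    · have : Filter.Tendsto
          (fun n => max (orbit Mex Nex x y n).1 (orbit Mex Nex x y n).2)
          Filter.atTop (nhds ((x+y)/2)) := by
        have hev : (fun _ : ℕ => ((x+y)/2:ℝ)) =ᶠ[Filter.atTop]
            (fun n => max (orbit Mex Nex x y n).1 (orbit Mex Nex x y n).2) := by
          refine Filter.eventually_atTop.2 ⟨1, fun n hn => ?_⟩
          cases n with
          | zero => omega
          | succ m => simp [(heq m).1, (heq m).2]
        exact Filter.Tendsto.congr' hev tendsto_const_nhds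
      exact this.limsup_eq
  · intro h
    set d : ℝ := y - x with hd_def
    have habs : |x - y| = d := by
      rw [abs_sub_comm, abs_of_nonneg (by linarith)]
    have hd : 1 < d := habs ▸ h
    have hdpos : (0:ℝ) < d := by linarith
    have hgap : ∀ n, (orbit Mex Nex x y n).2 - (orbit Mex Nex x y n).1
        = d ^ ((1/2:ℝ)^n) := by
      intro n
      induction n with
      | zero => simp [orbit]; exact hd_def.symm
      | succ n ih =>
        have hpe : (0:ℝ) < (1/2:ℝ)^n := by positivity
        have h1 : (1:ℝ) < d ^ ((1/2:ℝ)^n) :=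
          (Real.one_lt_rpow_iff_of_pos hdpos).2 (Or.inl ⟨hd, hpe⟩)
        have habs' : |(orbit Mex Nex x y n).1 - (orbit Mex Nex x y n).2|
            = d ^ ((1/2:ℝ)^n) := by
          rw [abs_sub_comm, abs_of_nonneg (by linarith), ih]
        rw [hstep n]; dsimp
        rw [gapMN, habs', if_neg (not_le.2 h1), Real.sqrt_eq_rpow,
          ← Real.rpow_mul hdpos.le, pow_succ]
    have hten : Filter.Tendsto
        (fun n => (orbit Mex Nex x y n).2 - (orbit Mex Nex x y n).1)
        Filter.atTop (nhds 1) := by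
      have he : Filter.Tendsto (fun n : ℕ => ((1/2:ℝ))^n) Filter.atTop (nhds 0) :=
        tendsto_pow_atTop_nhds_zero_of_lt_one (by norm_num) (by norm_num)
      have h2 : Filter.Tendsto (fun n : ℕ => d ^ ((1/2:ℝ)^n)) Filter.atTop
          (nhds (d ^ (0:ℝ))) :=
        Filter.Tendsto.rpow tendsto_const_nhds he (Or.inl (ne_of_gt hdpos))
      rw [Real.rpow_zero] at h2
      exact h2.congr (fun n => (hgap n).symm)
    refine ⟨hten, ?_, ?_⟩
    · have hmin : ∀ n, min (orbit Mex Nex x y n).1 (orbit Mex Nex x y n).2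
          = ((x+y) - d ^ ((1/2:ℝ)^n)) / 2 := by
        intro n
        have h1 := hgap n
        have h2 := hsum n
        have hp : (0:ℝ) < d ^ ((1/2:ℝ)^n) := Real.rpow_pos_of_pos hdpos _
        rw [min_eq_left (by linarith)]
        linarith
      have : Filter.Tendsto
          (fun n => min (orbit Mex Nex x y n).1 (orbit Mex Nex x y n).2)
          Filter.atTop (nhds ((x + y - 1)/2)) := by
        have he : Filter.Tendsto (fun n : ℕ => ((1/2:ℝ))^n) Filter.atTop (nhds 0) :=
          tendsto_pow_atTop_nhds_zero_of_lt_one (by norm_num) (by norm_num)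
        have h2 : Filter.Tendsto (fun n : ℕ => d ^ ((1/2:ℝ)^n)) Filter.atTop
            (nhds (d ^ (0:ℝ))) :=
          Filter.Tendsto.rpow tendsto_const_nhds he (Or.inl (ne_of_gt hdpos))
        rw [Real.rpow_zero] at h2
        have h3 := (Filter.Tendsto.sub (tendsto_const_nhds (x := x + y)) h2).div_const 2
        exact h3.congr (fun n => (hmin n).symm)
      exact this.liminf_eq
    · have hmax : ∀ n, max (orbit Mex Nex x y n).1 (orbit Mex Nex x y n).2
          = ((x+y) + d ^ ((1/2:ℝ)^n)) / 2 := by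
        intro n
        have h1 := hgap n
        have h2 := hsum n
        have hp : (0:ℝ) < d ^ ((1/2:ℝ)^n) := Real.rpow_pos_of_pos hdpos _
        rw [max_eq_right (by linarith)]
        linarith
      have : Filter.Tendsto
          (fun n => max (orbit Mex Nex x y n).1 (orbit Mex Nex x y n).2)
          Filter.atTop (nhds ((x + y + 1)/2)) := by
        have he : Filter.Tendsto (fun n : ℕ => ((1/2:ℝ))^n) Filter.atTop (nhds 0) :=
          tendsto_pow_atTop_nhds_zero_of_lt_one (by norm_num) (by norm_num)
        have h2 : Filter.Tendsto (fun n : ℕ => d ^ ((1/2:ℝ)^n)) Filter.atTop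
            (nhds (d ^ (0:ℝ))) :=
          Filter.Tendsto.rpow tendsto_const_nhds he (Or.inl (ne_of_gt hdpos))
        rw [Real.rpow_zero] at h2
        have h3 := (Filter.Tendsto.add (tendsto_const_nhds (x := x + y)) h2).div_const 2
        exact h3.congr (fun n => (hmax n).symm)
      exact this.limsup_eq
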